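/- (Automorphisms of the affine group of the complex line) Let Aff(ℂ) = { z ↦ az + b : a ∈ ℂ*, b ∈ ℂ }, viewed as a subgroup of the permutation group of ℂ. For every group automorphism φ of Aff(ℂ) there exist a ring automorphism τ of the field ℂ and an element ψ ∈ Aff(ℂ) such that φ(f) = (τ ∘ ψ) ∘ f ∘ (τ ∘ ψ)⁻¹ for every f ∈ Aff(ℂ) (equality of bijections of ℂ). (Note that for g ∈ Aff(ℂ), the map τ ∘ g ∘ τ⁻¹ is again in Aff(ℂ): it is g with its coefficients twisted by τ.) -/

import Mathlib

noncomputable section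

/-- The affine group of the complex line: the group (under composition) of bijections of
ℂ of the form `z ↦ a z + b` with `a ≠ 0`, as a subgroup of the permutation group of ℂ. -/
def AffC : Subgroup (Equiv.Perm ℂ) where
  carrier := { f : Equiv.Perm ℂ | ∃ a b : ℂ, a ≠ 0 ∧ ∀ z : ℂ, f z = a * z + b }
  one_mem' := ⟨1, 0, one_ne_zero, fun z => by simp⟩
  mul_mem' := by
    rintro f g ⟨a, b, ha, hf⟩ ⟨a', b', ha', hg⟩
    refine ⟨a * a', a * b' + b, mul_ne_zero ha ha', fun z => ?_⟩
    have e : (f * g) z = f (g z) := rfl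
    rw [e, hg z, hf]
    ring
  inv_mem' := by
    rintro f ⟨a, b, ha, hf⟩
    refine ⟨a⁻¹, -(a⁻¹ * b), inv_ne_zero ha, fun z => ?_⟩
    have e : (f⁻¹ : Equiv.Perm ℂ) z = f.symm z := rfl
    rw [e, Equiv.symm_apply_eq, hf]
    field_simp
    ring

namespace AffAux

/-- linear coefficient -/
def A (f : ↥AffC) : ℂ := (f : Equiv.Perm ℂ) 1 - (f : Equiv.Perm ℂ) 0
/-- constant coefficient -/
def B (f : ↥AffC) : ℂ := (f : Equiv.Perm ℂ) 0

def mk (a b : ℂ) (ha : a ≠ 0) : ↥AffC :=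
  ⟨{ toFun := fun z => a * z + b
     invFun := fun z => (z - b) / a
     left_inv := fun z => by field_simp; ring
     right_inv := fun z => by field_simp; ring },
   ⟨a, b, ha, fun z => rfl⟩⟩

@[simp] lemma mk_apply (a b : ℂ) (ha : a ≠ 0) (z : ℂ) :
    ((mk a b ha : ↥AffC) : Equiv.Perm ℂ) z = a * z + b := rfl

@[simp] lemma A_mk (a b : ℂ) (ha : a ≠ 0) : A (mk a b ha) = a := by
  show (a * 1 + b) - (a * 0 + b) = a; ring

@[simp] lemma B_mk (a b : ℂ) (ha : a ≠ 0) : B (mk a b ha) = b := by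
  show a * 0 + b = b; ring

lemma apply_eq (f : ↥AffC) (z : ℂ) : (f : Equiv.Perm ℂ) z = A f * z + B f := by
  obtain ⟨a, b, ha, h⟩ := f.2
  simp only [A, B, h]; ring

lemma A_ne (f : ↥AffC) : A f ≠ 0 := by
  obtain ⟨a, b, ha, h⟩ := f.2
  simp only [A, h]
  convert ha using 1; ring

lemma ext_AB {f g : ↥AffC} (hA : A f = A g) (hB : B f = B g) : f = g := by
  apply Subtype.ext; apply Equiv.ext; intro z
  rw [show (f : Equiv.Perm ℂ) z = _ from apply_eq f z,
      show (g : Equiv.Perm ℂ) z = _ from apply_eq g z, hA, hB]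

lemma mul_apply (f g : ↥AffC) (z : ℂ) :
    ((f * g : ↥AffC) : Equiv.Perm ℂ) z = (f : Equiv.Perm ℂ) ((g : Equiv.Perm ℂ) z) := rfl

lemma A_mul (f g : ↥AffC) : A (f * g) = A f * A g := by
  have h : A (f * g) = ((f * g : ↥AffC) : Equiv.Perm ℂ) 1 - ((f * g : ↥AffC) : Equiv.Perm ℂ) 0 := rfl
  rw [h, mul_apply, mul_apply, apply_eq g, apply_eq g, apply_eq f, apply_eq f]
  ring

lemma B_mul (f g : ↥AffC) : B (f * g) = A f * B g + B f := by
  have h : B (f * g) = ((f * g : ↥AffC) : Equiv.Perm ℂ) 0 := rfl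
  rw [h, mul_apply, apply_eq g, apply_eq f]
  ring

@[simp] lemma A_one : A (1 : ↥AffC) = 1 := by
  show ((1 : Equiv.Perm ℂ) 1 : ℂ) - (1 : Equiv.Perm ℂ) 0 = 1
  simp

@[simp] lemma B_one : B (1 : ↥AffC) = 0 := by
  show ((1 : Equiv.Perm ℂ) 0 : ℂ) = 0
  simp

lemma mk_mul (a b a' b' : ℂ) (ha : a ≠ 0) (ha' : a' ≠ 0) :
    mk a b ha * mk a' b' ha' = mk (a * a') (a * b' + b) (mul_ne_zero ha ha') := by
  apply ext_AB <;> simp [A_mul, B_mul]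

lemma mk_inv (a b : ℂ) (ha : a ≠ 0) :
    (mk a b ha)⁻¹ = mk a⁻¹ (-b / a) (inv_ne_zero ha) := by
  apply inv_eq_of_mul_eq_one_right
  rw [mk_mul]
  apply ext_AB <;> simp <;> field_simp <;> ring

lemma A_inv (f : ↥AffC) : A f⁻¹ = (A f)⁻¹ := by
  have h : A f * A f⁻¹ = 1 := by rw [← A_mul]; simp
  exact eq_inv_of_mul_eq_one_right (by linear_combination h)

lemma B_inv (f : ↥AffC) : A f * B f⁻¹ + B f = 0 := by
  rw [← B_mul]; simp

end AffAux

namespace AffAux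

def tr (b : ℂ) : ↥AffC := mk 1 b one_ne_zero
def sc (a : ℂ) (ha : a ≠ 0) : ↥AffC := mk a 0 ha

@[simp] lemma A_tr (b : ℂ) : A (tr b) = 1 := A_mk _ _ _
@[simp] lemma B_tr (b : ℂ) : B (tr b) = b := B_mk _ _ _
@[simp] lemma A_sc (a : ℂ) (ha : a ≠ 0) : A (sc a ha) = a := A_mk _ _ _
@[simp] lemma B_sc (a : ℂ) (ha : a ≠ 0) : B (sc a ha) = 0 := B_mk _ _ _

lemma tr_mul (b c : ℂ) : tr b * tr c = tr (b + c) := by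
  apply ext_AB <;> simp [A_mul, B_mul] ; ring

lemma tr_zero : tr 0 = 1 := by
  apply ext_AB <;> simp

/-- every translation is a commutator -/
lemma tr_comm_rel (b : ℂ) :
    tr b = sc 2 two_ne_zero * tr b * (sc 2 two_ne_zero)⁻¹ * (tr b)⁻¹ := by
  apply ext_AB
  · simp [A_mul, A_inv]
  · simp [B_mul, A_mul, A_inv]
    have h2 := B_inv (sc 2 two_ne_zero)
    have hb := B_inv (tr b)
    rw [A_sc, B_sc] at h2
    rw [A_tr, B_tr] at hb
    linear_combination (-1 : ℂ) * hb - h2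

/-- conjugation relation -/
lemma sc_tr_rel (a : ℂ) (ha : a ≠ 0) (b : ℂ) :
    sc a ha * tr b * (sc a ha)⁻¹ = tr (a * b) := by
  apply ext_AB
  · simp [A_mul, A_inv]
    field_simp
  · simp [B_mul, A_mul, A_inv]
    have h2 := B_inv (sc a ha)
    rw [A_sc, B_sc] at h2
    refine Or.inr ?_
    have h3 : a * B (sc a ha)⁻¹ = 0 := by linear_combination h2
    exact (mul_eq_zero.mp h3).resolve_left ha

lemma sc_comm (a : ℂ) (ha : a ≠ 0) :
    sc a ha * sc 2 two_ne_zero = sc 2 two_ne_zero * sc a ha := by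
  apply ext_AB <;> simp [A_mul, B_mul] <;> ring

lemma decompose (f : ↥AffC) : f = tr (B f) * sc (A f) (A_ne f) := by
  apply ext_AB <;> simp [A_mul, B_mul]

variable (φ : ↥AffC ≃* ↥AffC)

/-- image of any translation under any automorphism has linear part 1 -/
lemma A_map_tr (b : ℂ) : A (φ (tr b)) = 1 := by
  have h := congrArg φ (tr_comm_rel b)
  rw [map_mul, map_mul, map_mul, map_inv, map_inv] at h
  have hA := congrArg A h
  rw [A_mul, A_mul, A_mul, A_inv, A_inv] at hA
  set x := A (φ (sc 2 two_ne_zero)) with hx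
  set y := A (φ (tr b)) with hy
  have hx0 : x ≠ 0 := A_ne _
  have hy0 : y ≠ 0 := A_ne _
  -- hA : y = x * y * x⁻¹ * y⁻¹
  have h2 : y * (y * x) = 1 * (y * x) := by
    field_simp at hA ⊢
    linear_combination hA
  exact mul_right_cancel₀ (mul_ne_zero hy0 hx0) h2

def sig (b : ℂ) : ℂ := B (φ (tr b))

lemma map_tr (b : ℂ) : φ (tr b) = tr (sig φ b) := by
  apply ext_AB
  · rw [A_map_tr, A_tr]
  · rw [B_tr]; rfl

lemma sig_add (b c : ℂ) : sig φ (b + c) = sig φ b + sig φ c := by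
  have : φ (tr (b + c)) = tr (sig φ b + sig φ c) := by
    rw [← tr_mul, map_mul, map_tr, map_tr, tr_mul]
  have h := congrArg B this
  rw [B_tr] at h
  exact h

@[simp] lemma sig_zero : sig φ 0 = 0 := by
  unfold sig
  rw [tr_zero, map_one, B_one]

lemma sig_inj : Function.Injective (sig φ) := by
  intro b b' h
  have : φ (tr b) = φ (tr b') := by rw [map_tr, map_tr, h]
  have h2 := φ.injective this
  have h3 := congrArg B h2
  simpa using h3

lemma sig_surj : Function.Surjective (sig φ) := by
  intro w
  refine ⟨B (φ.symm (tr w)), ?_⟩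
  have hA : A (φ.symm (tr w)) = 1 := A_map_tr φ.symm w
  have : φ.symm (tr w) = tr (B (φ.symm (tr w))) := by
    apply ext_AB
    · rw [hA, A_tr]
    · rw [B_tr]
  have h2 : φ (tr (B (φ.symm (tr w)))) = tr w := by
    rw [← this, MulEquiv.apply_symm_apply]
  have h3 := congrArg B h2
  rw [B_tr] at h3
  exact h3

lemma sig_one_ne : sig φ 1 ≠ 0 := by
  intro h
  have := sig_inj φ (h.trans (sig_zero φ).symm)
  exact one_ne_zero this

lemma B_conj_tr (g : ↥AffC) (c : ℂ) : B (g * tr c * g⁻¹) = A g * c := by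
  rw [mul_assoc, B_mul, B_mul, A_tr, B_tr]
  have h := B_inv g
  linear_combination h

lemma sig_mul (a : ℂ) (ha : a ≠ 0) (b : ℂ) :
    sig φ (a * b) = A (φ (sc a ha)) * sig φ b := by
  have h := congrArg φ (sc_tr_rel a ha b)
  rw [map_mul, map_mul, map_inv, map_tr, map_tr] at h
  have h2 := congrArg B h
  rw [B_tr, B_conj_tr] at h2
  exact h2.symm

end AffAux

namespace AffAux

variable (φ : ↥AffC ≃* ↥AffC)

def tauHom : ℂ →+* ℂ where
  toFun x := sig φ x / sig φ 1
  map_one' := div_self (sig_one_ne φ)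
  map_zero' := by simp
  map_add' x y := by rw [sig_add]; ring
  map_mul' x y := by
    rcases eq_or_ne x 0 with rfl | hx
    · simp
    · have h1 := sig_mul φ x hx y
      have h2 := sig_mul φ x hx 1
      rw [mul_one] at h2
      rw [h1, h2]
      rw [div_mul_div_comm, div_eq_div_iff (sig_one_ne φ) (mul_ne_zero (sig_one_ne φ) (sig_one_ne φ))]
      ring

lemma tauHom_apply (x : ℂ) : tauHom φ x = sig φ x / sig φ 1 := rfl

lemma tauHom_bij : Function.Bijective (tauHom φ) := by
  constructor
  · intro a b h
    rw [tauHom_apply, tauHom_apply, div_eq_div_iff (sig_one_ne φ) (sig_one_ne φ)] at h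
    exact sig_inj φ (mul_right_cancel₀ (sig_one_ne φ) h)
  · intro w
    obtain ⟨b, hb⟩ := sig_surj φ (w * sig φ 1)
    refine ⟨b, ?_⟩
    rw [tauHom_apply, hb, mul_div_assoc, div_self (sig_one_ne φ), mul_one]

def tauE : ℂ ≃+* ℂ := RingEquiv.ofBijective (tauHom φ) (tauHom_bij φ)

lemma tauE_apply (x : ℂ) : tauE φ x = sig φ x / sig φ 1 := rfl

lemma sig_eq (b : ℂ) : sig φ b = sig φ 1 * tauE φ b := by
  rw [tauE_apply, mul_div_assoc', mul_comm, mul_div_assoc, div_self (sig_one_ne φ), mul_one]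

lemma A_map_sc (a : ℂ) (ha : a ≠ 0) : A (φ (sc a ha)) = tauE φ a := by
  have h := sig_mul φ a ha 1
  rw [mul_one] at h
  rw [tauE_apply, eq_div_iff (sig_one_ne φ)]
  linear_combination -h

lemma A_map_sc2 : A (φ (sc 2 two_ne_zero)) = 2 := by
  rw [A_map_sc, tauE_apply]
  have h2 : sig φ 2 = sig φ 1 + sig φ 1 := by
    rw [show (2 : ℂ) = 1 + 1 by norm_num, sig_add]
  rw [h2, div_eq_iff (sig_one_ne φ)]
  ring

/-- the common fixed-point translation coefficient -/
def cc : ℂ := -(B (φ (sc 2 two_ne_zero)))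

lemma B_map_sc (a : ℂ) (ha : a ≠ 0) :
    B (φ (sc a ha)) = (1 - tauE φ a) * cc φ := by
  have h := congrArg B (congrArg φ (sc_comm a ha))
  rw [map_mul, map_mul, B_mul, B_mul, A_map_sc2, A_map_sc] at h
  unfold cc
  linear_combination -h

lemma A_map (f : ↥AffC) : A (φ f) = tauE φ (A f) := by
  have h : φ f = φ (tr (B f)) * φ (sc (A f) (A_ne f)) := by
    rw [← map_mul, ← decompose]
  rw [h, A_mul, A_map_tr, A_map_sc, one_mul]

lemma B_map (f : ↥AffC) : B (φ f) = sig φ (B f) + (1 - tauE φ (A f)) * cc φ := by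
  have h : φ f = φ (tr (B f)) * φ (sc (A f) (A_ne f)) := by
    rw [← map_mul, ← decompose]
  rw [h, B_mul, map_tr, A_tr, B_tr, B_map_sc, one_mul, add_comm]

end AffAux

open AffAux in
/-- (Automorphisms of the affine group of the complex line.)  Every group automorphism
`φ` of `Aff(ℂ)` is the composition of an inner automorphism and the action of a field
automorphism `τ` of ℂ: `φ(f) = (τ ∘ ψ) ∘ f ∘ (τ ∘ ψ)⁻¹` for all `f ∈ Aff(ℂ)`. -/
theorem affC_automorphisms (φ : ↥AffC ≃* ↥AffC) :
    ∃ (τ : ℂ ≃+* ℂ) (ψ : ↥AffC), ∀ f : ↥AffC, ∀ z : ℂ,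
      ((φ f : ↥AffC) : Equiv.Perm ℂ) z =
        τ (((ψ * f * ψ⁻¹ : ↥AffC) : Equiv.Perm ℂ) (τ.symm z)) := by
  set τ := tauE φ with hτ
  have hp : (τ.symm (sig φ 1) : ℂ) ≠ 0 := by
    intro h
    apply sig_one_ne φ
    have := congrArg τ h
    rwa [RingEquiv.apply_symm_apply, map_zero] at this
  set p : ℂ := τ.symm (sig φ 1) with hpdef
  set q : ℂ := τ.symm (cc φ) with hqdef
  refine ⟨τ, mk p q hp, fun f z => ?_⟩
  have hτp : τ p = sig φ 1 := RingEquiv.apply_symm_apply τ _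
  have hτq : τ q = cc φ := RingEquiv.apply_symm_apply τ _
  -- coefficients of the conjugated element
  have hAc : A (mk p q hp * f * (mk p q hp)⁻¹) = p * A f * p⁻¹ := by
    rw [A_mul, A_mul, A_inv, A_mk]
  have hBc : B (mk p q hp * f * (mk p q hp)⁻¹) = p * A f * (-q / p) + (p * B f + q) := by
    rw [mk_inv, B_mul, A_mul, B_mk, A_mk, B_mul, A_mk, B_mk]
  rw [apply_eq, apply_eq, hAc, hBc, A_map, B_map]
  simp only [map_add, map_mul, map_inv₀, map_div₀, map_neg, hτp, hτq,
    RingEquiv.apply_symm_apply]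
  rw [sig_eq φ (B f)]
  have h1 : sig φ 1 ≠ 0 := sig_one_ne φ
  field_simp
  ring
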